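/- Let l, k > 0 and d ≥ 0 with l² = d² + k² (so the parallelogram D with vertices O=(0,0), P=(l,0), Q=(d,k), R=(l+d,k) is a rhombus). Let v_ε = (1/2)·k·((d+l)² + k²)/(k² + d² + l²) and h(v) = 1 + (m(v) + (4dlv − k((d+l)² + k²))·√(m(v))) / (8k²l²(k−v)v) with m(v) = 16l²(d²+k²)v² − 8lk(dk² + d³ + 2ld² + l²d + 2k²l)v + k²(2dl + l² + d² + k²)². Then h(v_ε) = 1 (so the unique minimal-eccentricity inscribed ellipse is a circle), and the diagonals OR and PQ of D are perpendicular: (l+d)·(d−l) + k·k = 0. -/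

import Mathlib

theorem stmt_10 (l k d : ℝ) (hl : 0 < l) (hk : 0 < k) (hd : 0 ≤ d)
    (hrhombus : l ^ 2 = d ^ 2 + k ^ 2)
    (m h : ℝ → ℝ)
    (hm : ∀ v, m v = 16 * l ^ 2 * (d ^ 2 + k ^ 2) * v ^ 2
      - 8 * l * k * (d * k ^ 2 + d ^ 3 + 2 * l * d ^ 2 + l ^ 2 * d + 2 * k ^ 2 * l) * v
      + k ^ 2 * (2 * d * l + l ^ 2 + d ^ 2 + k ^ 2) ^ 2)
    (hh : ∀ v ∈ Set.Ioo (0 : ℝ) k,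
      h v = 1 + (m v + (4 * d * l * v - k * ((d + l) ^ 2 + k ^ 2)) * Real.sqrt (m v))
        / (8 * k ^ 2 * l ^ 2 * (k - v) * v))
    (vε : ℝ) (hvε : vε = 1 / 2 * k * ((d + l) ^ 2 + k ^ 2) / (k ^ 2 + d ^ 2 + l ^ 2)) :
    h vε = 1 ∧ (l + d) * (d - l) + k * k = 0 := by
  have hden : (0:ℝ) < k ^ 2 + d ^ 2 + l ^ 2 := by positivity
  have hmem : vε ∈ Set.Ioo (0:ℝ) k := by
    constructor
    · rw [hvε]
      have hnum : (0:ℝ) < 1 / 2 * k * ((d + l) ^ 2 + k ^ 2) := by positivity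
      exact div_pos hnum hden
    · rw [hvε, div_lt_iff₀ hden]
      have h1 : (d + l) ^ 2 + k ^ 2 < 2 * (k ^ 2 + d ^ 2 + l ^ 2) := by
        nlinarith [sq_nonneg (d - l)]
      nlinarith [mul_lt_mul_of_pos_left h1 hk]
  have hform : m vε = 4 * l ^ 2 * (2 * l * vε - k * (d + l)) ^ 2 := by
    rw [hm]
    linear_combination (-(16 * l ^ 2 * vε ^ 2 - 8 * l * k * vε * (d + 2 * l)
      + k ^ 2 * (4 * d * l + 3 * l ^ 2 + d ^ 2 + k ^ 2))) * hrhombus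
  have hkey : 2 * l * vε - k * (d + l) = 0 := by
    rw [hvε]
    field_simp
    linear_combination (k * d) * hrhombus
  have hmv : m vε = 0 := by rw [hform, hkey]; ring
  refine ⟨?_, by nlinarith⟩
  rw [hh vε hmem, hmv, Real.sqrt_zero]
  simp
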